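/- Let ℓ ≥ 1, let n ≥ 3 be an odd integer, and for each k = 0, 1, …, n let F_k : (ℝ^ℓ)^k → ℝ^ℓ be a symmetric k-linear map (with F₀ a constant vector). Define the polynomial map f : ℝ^ℓ → ℝ^ℓ by f(u) = Σ_{k=0}^n F_k(u, …, u). Assume that ⟨F_n(u, …, u, v), v⟩ < 0 for all u, v ∈ ℝ^ℓ ∖ {0}, where ⟨·,·⟩ is the Euclidean inner product. Then there exist constants c > 0 and C > 0 such that ⟨f(u+v), u⟩ ≤ C(1 + ‖v‖^{n+1}) − c ‖u‖^{n+1} for every u, v ∈ ℝ^ℓ. -/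

import Mathlib

open scoped RealInnerProductSpace


lemma euclid_decomp {ℓ : ℕ} (u : EuclideanSpace ℝ (Fin ℓ)) :
    u = ∑ i, u i • EuclideanSpace.single i (1:ℝ) := by
  ext j
  rw [WithLp.ofLp_sum, Finset.sum_apply]
  simp [EuclideanSpace.single_apply]

lemma euclid_coord {ℓ : ℕ} (u : EuclideanSpace ℝ (Fin ℓ)) (i : Fin ℓ) : |u i| ≤ ‖u‖ := by
  have h := abs_real_inner_le_norm (EuclideanSpace.single i (1:ℝ)) u
  simpa [EuclideanSpace.inner_single_left, EuclideanSpace.norm_single] using h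

lemma multilinear_bound {ℓ : ℕ} : ∀ (k : ℕ)
    (f : MultilinearMap ℝ (fun _ : Fin k => EuclideanSpace ℝ (Fin ℓ)) (EuclideanSpace ℝ (Fin ℓ))),
    ∃ M : ℝ, 0 < M ∧ ∀ m, ‖f m‖ ≤ M * ∏ i, ‖m i‖ := by
  intro k
  induction k with
  | zero =>
    intro f
    refine ⟨‖f 0‖ + 1, by positivity, fun m => ?_⟩
    have : m = 0 := Subsingleton.elim _ _
    subst this
    simp
  | succ k ih =>
    intro f
    choose M hMpos hM using fun i : Fin ℓ => ih (f.curryLeft (EuclideanSpace.single i (1:ℝ)))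
    have hs : (0:ℝ) ≤ ∑ i, M i := Finset.sum_nonneg fun i _ => (hMpos i).le
    refine ⟨(∑ i, M i) + 1, by linarith, fun m => ?_⟩
    have hdec : f m = ∑ i, (m 0 i) • (f.curryLeft (EuclideanSpace.single i (1:ℝ)) (Fin.tail m)) := by
      conv_lhs => rw [← Fin.cons_self_tail m, ← MultilinearMap.curryLeft_apply,
        euclid_decomp (m 0)]
      rw [map_sum]
      simp [MultilinearMap.curryLeft_apply]
    calc ‖f m‖ ≤ ∑ i, ‖(m 0 i) • (f.curryLeft (EuclideanSpace.single i (1:ℝ)) (Fin.tail m))‖ := by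
          rw [hdec]; exact norm_sum_le _ _
      _ ≤ ∑ i, ‖m 0‖ * (M i * ∏ j, ‖Fin.tail m j‖) := by
          refine Finset.sum_le_sum fun i _ => ?_
          rw [norm_smul]
          have h1 : ‖m 0 i‖ ≤ ‖m 0‖ := by simpa [Real.norm_eq_abs] using euclid_coord (m 0) i
          exact mul_le_mul h1 (hM i _) (norm_nonneg _) (norm_nonneg _)
      _ = (∑ i, M i) * (‖m 0‖ * ∏ j, ‖Fin.tail m j‖) := by
          rw [Finset.sum_mul]
          exact Finset.sum_congr rfl fun i _ => by ring
      _ ≤ ((∑ i, M i) + 1) * ∏ i, ‖m i‖ := by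
          rw [Fin.prod_univ_succ]
          have hp : (0:ℝ) ≤ ‖m 0‖ * ∏ j, ‖Fin.tail m j‖ := by positivity
          have hs : (0:ℝ) ≤ ∑ i, M i := Finset.sum_nonneg fun i _ => (hMpos i).le
          have : ∏ j, ‖Fin.tail m j‖ = ∏ j : Fin k, ‖m j.succ‖ := rfl
          rw [← this]
          nlinarith

lemma young_a (n : ℕ) {δ : ℝ} (hδ : 0 < δ) (x y : ℝ) (hx : 0 ≤ x) (hy : 0 ≤ y) :
    x ^ n * y ≤ δ * x ^ (n + 1) + (δ⁻¹) ^ n * y ^ (n + 1) := by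
  rcases le_or_gt y (δ * x) with h | h
  · have h1 : x ^ n * y ≤ x ^ n * (δ * x) :=
      mul_le_mul_of_nonneg_left h (pow_nonneg hx n)
    have h2 : x ^ n * (δ * x) = δ * x ^ (n + 1) := by rw [pow_succ]; ring
    have h3 : (0:ℝ) ≤ (δ⁻¹) ^ n * y ^ (n + 1) := by positivity
    linarith
  · have hxy : x ≤ δ⁻¹ * y := by
      rw [le_inv_mul_iff₀ hδ]
      exact h.le
    have h1 : x ^ n ≤ (δ⁻¹ * y) ^ n := pow_le_pow_left₀ hx hxy n
    have h2 : x ^ n * y ≤ (δ⁻¹ * y) ^ n * y :=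
      mul_le_mul_of_nonneg_right h1 hy
    have h3 : (δ⁻¹ * y) ^ n * y = (δ⁻¹) ^ n * y ^ (n + 1) := by
      rw [mul_pow, pow_succ]; ring
    have h4 : (0:ℝ) ≤ δ * x ^ (n + 1) := by positivity
    linarith

lemma young_b (n p : ℕ) (hp : p ≤ n) {δ : ℝ} (hδ : 0 < δ) :
    ∃ C : ℝ, 0 < C ∧ ∀ t : ℝ, 0 ≤ t → t ^ p ≤ δ * t ^ (n + 1) + C := by
  set lam : ℝ := min δ 1 with hlam
  have hlam0 : 0 < lam := lt_min hδ one_pos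
  have hlam1 : lam ≤ 1 := min_le_right _ _
  have hlamδ : lam ≤ δ := min_le_left _ _
  refine ⟨(lam⁻¹) ^ p, by positivity, fun t ht => ?_⟩
  have base : ∀ s : ℝ, 0 ≤ s → s ^ p ≤ s ^ (n + 1) + 1 := by
    intro s hs
    rcases le_total s 1 with h | h
    · have := pow_le_one₀ hs h (n := p)
      have h2 : (0:ℝ) ≤ s ^ (n+1) := by positivity
      linarith
    · have := pow_le_pow_right₀ h (by omega : p ≤ n + 1)
      linarith
  have h1 := base (lam * t) (by positivity)
  rw [mul_pow, mul_pow] at h1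
  -- lam^p * t^p ≤ lam^(n+1) * t^(n+1) + 1
  have hlp : (0:ℝ) < lam ^ p := by positivity
  have key : t ^ p ≤ (lam ^ (n + 1) / lam ^ p) * t ^ (n + 1) + (lam⁻¹) ^ p := by
    rw [inv_pow, ← mul_le_mul_iff_right₀ hlp]
    have heq : lam ^ p * (lam ^ (n + 1) / lam ^ p * t ^ (n + 1) + (lam ^ p)⁻¹)
        = lam ^ (n + 1) * t ^ (n + 1) + 1 := by
      field_simp
    rw [heq]
    exact h1
  have hcoef : lam ^ (n + 1) / lam ^ p ≤ δ := by
    have h2 : lam ^ (n + 1) / lam ^ p = lam ^ (n + 1 - p) := by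
      rw [div_eq_mul_inv, ← pow_sub₀ _ hlam0.ne' (Nat.le_succ_of_le hp)]
    rw [h2]
    have h3 : lam ^ (n + 1 - p) ≤ lam := by
      apply pow_le_of_le_one hlam0.le hlam1
      omega
    linarith
  have ht1 : (0:ℝ) ≤ t ^ (n+1) := by positivity
  nlinarith [mul_le_mul_of_nonneg_right hcoef ht1]
lemma leading_neg {ℓ n : ℕ} (hℓ : 1 ≤ ℓ) (hn : 1 ≤ n)
    (f : MultilinearMap ℝ (fun _ : Fin n => EuclideanSpace ℝ (Fin ℓ)) (EuclideanSpace ℝ (Fin ℓ)))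
    (hneg : ∀ w : EuclideanSpace ℝ (Fin ℓ), w ≠ 0 → ⟪f (fun _ => w), w⟫ < 0) :
    ∃ c₀ : ℝ, 0 < c₀ ∧ ∀ w, ⟪f (fun _ => w), w⟫ ≤ -c₀ * ‖w‖ ^ (n + 1) := by
  obtain ⟨M, hM0, hM⟩ := multilinear_bound n f
  have hcontf : Continuous f := f.continuous_of_bound M hM
  have hcont : Continuous fun w : EuclideanSpace ℝ (Fin ℓ) => (⟪f (fun _ => w), w⟫ : ℝ) :=
    Continuous.inner (hcontf.comp (continuous_pi fun _ => continuous_id)) continuous_id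
  have hx₀ : ‖EuclideanSpace.single (⟨0, hℓ⟩ : Fin ℓ) (1:ℝ)‖ = 1 := by
    rw [EuclideanSpace.norm_single]; simp
  obtain ⟨w₀, hw₀, hmax⟩ := (isCompact_sphere (0 : EuclideanSpace ℝ (Fin ℓ)) 1).exists_isMaxOn
    ⟨_, mem_sphere_zero_iff_norm.2 hx₀⟩ hcont.continuousOn
  have hw₀norm : ‖w₀‖ = 1 := mem_sphere_zero_iff_norm.1 hw₀
  have hw₀ne : w₀ ≠ 0 := by
    intro h; rw [h, norm_zero] at hw₀norm; norm_num at hw₀norm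
  refine ⟨-⟪f (fun _ => w₀), w₀⟫, by linarith [hneg w₀ hw₀ne], fun w => ?_⟩
  have hhom : ∀ (s : ℝ) (x : EuclideanSpace ℝ (Fin ℓ)),
      (⟪f (fun _ => s • x), s • x⟫ : ℝ) = s ^ (n + 1) * ⟪f (fun _ => x), x⟫ := by
    intro s x
    have h1 : f (fun _ : Fin n => s • x) = (s ^ n) • f (fun _ => x) := by
      have := f.map_smul_univ (fun _ : Fin n => s) (fun _ => x)
      simpa using this
    rw [h1, real_inner_smul_left, real_inner_smul_right, pow_succ]; ring
  by_cases hw : w = 0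
  · subst hw
    have h0 : f (fun _ : Fin n => (0 : EuclideanSpace ℝ (Fin ℓ))) = 0 :=
      f.map_coord_zero (m := fun _ => 0) ⟨0, hn⟩ rfl
    simp [h0]
  · have ht : (0:ℝ) < ‖w‖ := norm_pos_iff.2 hw
    set u : EuclideanSpace ℝ (Fin ℓ) := ‖w‖⁻¹ • w with hu
    have humem : u ∈ Metric.sphere (0 : EuclideanSpace ℝ (Fin ℓ)) 1 := by
      rw [mem_sphere_zero_iff_norm, hu, norm_smul, norm_inv, norm_norm]
      field_simp
    have hle : (⟪f (fun _ => u), u⟫ : ℝ) ≤ ⟪f (fun _ => w₀), w₀⟫ := hmax humem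
    have hwu : w = ‖w‖ • u := by rw [hu, smul_inv_smul₀ ht.ne']
    calc (⟪f (fun _ => w), w⟫ : ℝ) = ‖w‖ ^ (n+1) * ⟪f (fun _ => u), u⟫ := by
          conv_lhs => rw [hwu]
          rw [hhom]
      _ ≤ ‖w‖ ^ (n+1) * ⟪f (fun _ => w₀), w₀⟫ :=
          mul_le_mul_of_nonneg_left hle (by positivity)
      _ = -(-⟪f (fun _ => w₀), w₀⟫) * ‖w‖ ^ (n+1) := by ring

lemma add_pow_le2 (a b : ℝ) (ha : 0 ≤ a) (hb : 0 ≤ b) (m : ℕ) :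
    (a + b) ^ m ≤ 2 ^ m * (a ^ m + b ^ m) := by
  rcases le_total a b with h | h
  · calc (a+b)^m ≤ (2*b)^m := by gcongr <;> linarith
      _ = 2^m * b^m := by rw [mul_pow]
      _ ≤ 2^m * (a^m + b^m) := by nlinarith [pow_nonneg ha m, pow_pos (by norm_num : (0:ℝ)<2) m]
  · calc (a+b)^m ≤ (2*a)^m := by gcongr <;> linarith
      _ = 2^m * a^m := by rw [mul_pow]
      _ ≤ 2^m * (a^m + b^m) := by nlinarith [pow_nonneg hb m, pow_pos (by norm_num : (0:ℝ)<2) m]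

/-- The inequality (e:boundf): if `f(u) = Σ_{k=0}^n F_k(u,…,u)` is an odd-degree polynomial
map on `ℝ^ℓ` whose leading symmetric `n`-linear part satisfies `⟨F_n(u,…,u,v), v⟩ < 0` for all
nonzero `u, v`, then there are `c, C > 0` with
`⟨f(u+v), u⟩ ≤ C(1 + ‖v‖^{n+1}) − c‖u‖^{n+1}` for all `u, v`. -/
theorem stmt12 {ℓ n : ℕ} (hℓ : 1 ≤ ℓ) (hn : 3 ≤ n) (hodd : Odd n)
    (F : ∀ k : ℕ,
      MultilinearMap ℝ (fun _ : Fin k => EuclideanSpace ℝ (Fin ℓ)) (EuclideanSpace ℝ (Fin ℓ)))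
    (hsymm : ∀ (k : ℕ) (σ : Equiv.Perm (Fin k)) (x : Fin k → EuclideanSpace ℝ (Fin ℓ)),
      F k (x ∘ σ) = F k x)
    (hneg : ∀ u v : EuclideanSpace ℝ (Fin ℓ), u ≠ 0 → v ≠ 0 →
      ⟪F n (fun i => if (i : ℕ) < n - 1 then u else v), v⟫ < 0) :
    ∃ c C : ℝ, 0 < c ∧ 0 < C ∧ ∀ u v : EuclideanSpace ℝ (Fin ℓ),
      ⟪∑ k ∈ Finset.range (n + 1), F k (fun _ => u + v), u⟫ ≤
        C * (1 + ‖v‖ ^ (n + 1)) - c * ‖u‖ ^ (n + 1) := by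
  classical
  have hnR : (0:ℝ) < (n:ℝ) := by exact_mod_cast (by omega : 0 < n)
  choose M hM0 hM using fun k : ℕ => multilinear_bound k (F k)
  have hdiag : ∀ (k : ℕ) (w : EuclideanSpace ℝ (Fin ℓ)), ‖F k (fun _ => w)‖ ≤ M k * ‖w‖ ^ k := by
    intro k w
    simpa using hM k (fun _ => w)
  have hneg' : ∀ w : EuclideanSpace ℝ (Fin ℓ), w ≠ 0 → (⟪F n (fun _ => w), w⟫ : ℝ) < 0 :=
    fun w hw => by simpa using hneg w w hw hw
  obtain ⟨c₀, hc₀, hlead⟩ := leading_neg hℓ (by omega) (F n) hneg'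
  set c₁ : ℝ := c₀ / 2 ^ (n + 2) with hc₁def
  have hc₁ : 0 < c₁ := by positivity
  -- Young constants for the lower-order terms
  have hδpos : ∀ k, 0 < c₁ / (2 ^ (n + 2) * (n:ℝ) * M k) := fun k =>
    div_pos hc₁ (mul_pos (mul_pos (pow_pos two_pos _) hnR) (hM0 k))
  have hyoung : ∀ k : ℕ, ∃ C, 0 < C ∧ (k < n → ∀ t : ℝ, 0 ≤ t →
      t ^ (k + 1) ≤ (c₁ / (2 ^ (n + 2) * (n:ℝ) * M k)) * t ^ (n + 1) + C) := by
    intro k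
    by_cases hk : k < n
    · obtain ⟨C, hC, h⟩ := young_b n (k + 1) (by omega) (hδpos k)
      exact ⟨C, hC, fun _ => h⟩
    · exact ⟨1, one_pos, fun h => absurd h hk⟩
  choose Cy hCy0 hCy using hyoung
  set K : ℝ := ∑ k ∈ Finset.range n, M k * Cy k with hKdef
  have hK0 : 0 ≤ K := Finset.sum_nonneg fun k _ => (mul_pos (hM0 k) (hCy0 k)).le
  set CL : ℝ := M n * ((c₀ / (2 * M n))⁻¹) ^ n with hCLdef
  have hCL0 : 0 < CL := by
    rw [hCLdef]
    exact mul_pos (hM0 n) (pow_pos (inv_pos.2 (div_pos hc₀ (by linarith [hM0 n]))) n)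
  refine ⟨c₁ / 2, CL + c₀ / 2 + c₁ / 2 + K + 1, by positivity, by linarith, fun u v => ?_⟩
  set w : EuclideanSpace ℝ (Fin ℓ) := u + v with hwdef
  set A : ℝ := ‖u‖ with hAdef
  set B : ℝ := ‖v‖ with hBdef
  have hA : 0 ≤ A := norm_nonneg u
  have hB : 0 ≤ B := norm_nonneg v
  have hwT : ‖w‖ ≤ A + B := norm_add_le u v
  have hAw : A ≤ ‖w‖ + B := by
    have : u = w - v := by rw [hwdef]; abel
    calc A = ‖w - v‖ := by rw [← this]
      _ ≤ ‖w‖ + B := norm_sub_le w v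
  -- split the sum
  rw [sum_inner, Finset.sum_range_succ]
  -- lower-order terms
  have hlow : ∀ k ∈ Finset.range n, (⟪F k (fun _ => w), u⟫ : ℝ) ≤
      c₁ / (2 * (n:ℝ)) * (A ^ (n + 1) + B ^ (n + 1)) + M k * Cy k := by
    intro k hk
    have hk' : k < n := Finset.mem_range.1 hk
    have h2n2 : (0:ℝ) < 2 ^ (n + 2) := by positivity
    calc (⟪F k (fun _ => w), u⟫ : ℝ) ≤ ‖F k (fun _ => w)‖ * ‖u‖ := real_inner_le_norm _ _
      _ ≤ (M k * ‖w‖ ^ k) * A := by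
          exact mul_le_mul_of_nonneg_right (hdiag k w) hA
      _ ≤ (M k * (A + B) ^ k) * (A + B) := by
          have hwk : ‖w‖ ^ k ≤ (A + B) ^ k := pow_le_pow_left₀ (norm_nonneg w) hwT k
          exact mul_le_mul (mul_le_mul_of_nonneg_left hwk (hM0 k).le) (by linarith)
            hA (mul_nonneg (hM0 k).le (by positivity))
      _ = M k * (A + B) ^ (k + 1) := by rw [pow_succ]; ring
      _ ≤ M k * ((c₁ / (2 ^ (n + 2) * (n:ℝ) * M k)) * (A + B) ^ (n + 1) + Cy k) :=
          mul_le_mul_of_nonneg_left (hCy k hk' (A + B) (by linarith)) (hM0 k).le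
      _ = (c₁ / (2 ^ (n + 2) * (n:ℝ))) * (A + B) ^ (n + 1) + M k * Cy k := by
          have hMk : M k ≠ 0 := (hM0 k).ne'
          have hX : ((2:ℝ) ^ (n + 2) * (n:ℝ)) ≠ 0 := by positivity
          field_simp
      _ ≤ (c₁ / (2 ^ (n + 2) * (n:ℝ))) * (2 ^ (n + 1) * (A ^ (n + 1) + B ^ (n + 1)))
            + M k * Cy k := by
          gcongr
          exact add_pow_le2 A B hA hB (n + 1)
      _ = c₁ / (2 * (n:ℝ)) * (A ^ (n + 1) + B ^ (n + 1)) + M k * Cy k := by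
          rw [show (n + 2) = (n + 1) + 1 from rfl, pow_succ]
          field_simp
  have hlowsum : (∑ k ∈ Finset.range n, (⟪F k (fun _ => w), u⟫ : ℝ)) ≤
      c₁ / 2 * (A ^ (n + 1) + B ^ (n + 1)) + K := by
    calc (∑ k ∈ Finset.range n, (⟪F k (fun _ => w), u⟫ : ℝ))
        ≤ ∑ k ∈ Finset.range n,
            (c₁ / (2 * (n:ℝ)) * (A ^ (n + 1) + B ^ (n + 1)) + M k * Cy k) :=
          Finset.sum_le_sum hlow
      _ = (n:ℝ) * (c₁ / (2 * (n:ℝ)) * (A ^ (n + 1) + B ^ (n + 1))) + K := by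
          rw [Finset.sum_add_distrib, Finset.sum_const, Finset.card_range, hKdef]
          simp [nsmul_eq_mul]
      _ = c₁ / 2 * (A ^ (n + 1) + B ^ (n + 1)) + K := by
          field_simp
  -- leading term
  have hleadterm : (⟪F n (fun _ => w), u⟫ : ℝ) ≤
      -c₁ * A ^ (n + 1) + (CL + c₀ / 2) * B ^ (n + 1) := by
    have hsplit : (⟪F n (fun _ => w), u⟫ : ℝ) =
        ⟪F n (fun _ => w), w⟫ - ⟪F n (fun _ => w), v⟫ := by
      rw [← inner_sub_right]
      congr 1
      rw [hwdef]; abel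
    have h2 : (⟪F n (fun _ => w), w⟫ : ℝ) ≤ -c₀ * ‖w‖ ^ (n + 1) := hlead w
    have h3 : -(⟪F n (fun _ => w), v⟫ : ℝ) ≤ M n * ‖w‖ ^ n * B := by
      have habs := abs_real_inner_le_norm (F n (fun _ => w)) v
      have hb := mul_le_mul_of_nonneg_right (hdiag n w) hB
      calc -(⟪F n (fun _ => w), v⟫ : ℝ) ≤ |⟪F n (fun _ => w), v⟫| := neg_le_abs _
        _ ≤ ‖F n (fun _ => w)‖ * B := habs
        _ ≤ M n * ‖w‖ ^ n * B := hb
    have hδL : (0:ℝ) < c₀ / (2 * M n) := div_pos hc₀ (by linarith [hM0 n])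
    have h4 : ‖w‖ ^ n * B ≤ (c₀ / (2 * M n)) * ‖w‖ ^ (n + 1)
        + ((c₀ / (2 * M n))⁻¹) ^ n * B ^ (n + 1) :=
      young_a n hδL ‖w‖ B (norm_nonneg w) hB
    have h5 : M n * ‖w‖ ^ n * B ≤ c₀ / 2 * ‖w‖ ^ (n + 1) + CL * B ^ (n + 1) := by
      have := mul_le_mul_of_nonneg_left h4 (hM0 n).le
      have heq : M n * ((c₀ / (2 * M n)) * ‖w‖ ^ (n + 1)
          + ((c₀ / (2 * M n))⁻¹) ^ n * B ^ (n + 1))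
          = c₀ / 2 * ‖w‖ ^ (n + 1) + CL * B ^ (n + 1) := by
        have hMn : M n ≠ 0 := (hM0 n).ne'
        have hc₀' : c₀ ≠ 0 := hc₀.ne'
        rw [hCLdef]
        field_simp
      calc M n * ‖w‖ ^ n * B = M n * (‖w‖ ^ n * B) := by ring
        _ ≤ M n * ((c₀ / (2 * M n)) * ‖w‖ ^ (n + 1)
            + ((c₀ / (2 * M n))⁻¹) ^ n * B ^ (n + 1)) := this
        _ = c₀ / 2 * ‖w‖ ^ (n + 1) + CL * B ^ (n + 1) := heq
    -- convert ‖w‖ to A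
    have h6 : A ^ (n + 1) ≤ 2 ^ (n + 1) * (‖w‖ ^ (n + 1) + B ^ (n + 1)) := by
      calc A ^ (n + 1) ≤ (‖w‖ + B) ^ (n + 1) := by gcongr
        _ ≤ 2 ^ (n + 1) * (‖w‖ ^ (n + 1) + B ^ (n + 1)) :=
          add_pow_le2 _ _ (norm_nonneg w) hB (n + 1)
    have h7 : -(c₀ / 2) * ‖w‖ ^ (n + 1) ≤ -c₁ * A ^ (n + 1) + c₀ / 2 * B ^ (n + 1) := by
      have h8 : c₁ * A ^ (n + 1) ≤ c₀ / 2 * ‖w‖ ^ (n + 1) + c₀ / 2 * B ^ (n + 1) := by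
        have := mul_le_mul_of_nonneg_left h6 hc₁.le
        have heq2 : c₁ * (2 ^ (n + 1) * (‖w‖ ^ (n + 1) + B ^ (n + 1)))
            = c₀ / 2 * ‖w‖ ^ (n + 1) + c₀ / 2 * B ^ (n + 1) := by
          rw [hc₁def, show (n + 2) = (n + 1) + 1 from rfl, pow_succ]
          field_simp
        linarith [this, heq2 ▸ this]
      linarith
    linarith [hsplit, h2, h3, h5, h7]
  -- combine
  have hBp : (0:ℝ) ≤ B ^ (n + 1) := by positivity
  have hAp : (0:ℝ) ≤ A ^ (n + 1) := by positivity
  nlinarith [hlowsum, hleadterm]
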